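/- FHR moment function for the average structural function (ASF) in the Weibull MPH model (equation B.9). Consider the MPH model with Weibull baseline hazard Λ_α(y) = y^α, λ_α(y) = α y^{α−1} (α > 0), with T ≥ 2 periods, and fix a target (ỹ₋, x̃) ∈ (0,∞) × ℝ^k. Let h(y^T, x^T, a) = Γ(1 + 1/α) e^{−x̃'β/α − γ ỹ₋/α} e^{−a/α} (the conditional mean of Y_t given X_t = x̃, Y_{t−1} = ỹ₋, A = a) and φ(y^T, x^T) = e^{−x̃'β/α − γ ỹ₋/α} · (Γ(1 + 1/α) Γ(T) / Γ(T + 1/α)) · p̄^{1/α}, where p̄ = Σ_{t=1}^T ρ_θ(y_t, y_{t−1}, x_t). Then: (i) ∫ (φ − h) ∏_{t=1}^T f_θ(y_t | y_{t−1}, x_t, a) dy_1⋯dy_T = 0 for all (y_0, x_1,…,x_T, a); and (ii) for each s = 2,…,T the partial integral ∫ (φ − h) ∏_{t=s}^T f_θ(y_t | y_{t−1}, x_t, a) dy_s⋯dy_T does not depend on (x_s,…,x_T). Consequently, under every feedback process and heterogeneity distribution making φ and h integrable, E[φ(Y^T, X^T)] equals the average structural function Γ(1 + 1/α) e^{−x̃'β/α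 − γ ỹ₋/α} E[e^{−A/α}]. -/

import Mathlib

/-!
Equation (B.9) of Bonhomme, Dano & Graham: FHR moment function for the average
structural function (ASF) in the Weibull MPH model. With Weibull baseline hazard
`Λ_α(y) = y^α`, `λ_α(y) = α y^{α−1}`, target `(ỹ₋, x̃)`,
`h(y^T, x^T, a) = Γ(1 + 1/α) e^{−x̃'β/α − γ ỹ₋/α} e^{−a/α}` and
`φ(y^T, x^T) = e^{−x̃'β/α − γ ỹ₋/α} (Γ(1 + 1/α) Γ(T)/Γ(T + 1/α)) p̄^{1/α}`,
the pair `(φ, h)` satisfies the average-effect FHR conditions, and consequently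
`E[φ] = Γ(1 + 1/α) e^{−x̃'β/α − γ ỹ₋/α} E[e^{−A/α}]` under every feedback process and
heterogeneity distribution making `φ` and `h` integrable.
-/

open MeasureTheory ProbabilityTheory Function Set
open scoped ENNReal

noncomputable section

section Framework

variable {Y X A : Type*} [MeasurableSpace Y] [MeasurableSpace X] [MeasurableSpace A]

/-- Iterated partial integral of `φ` against `∏_{r=t}^{t+n-1} f_r dμ(y_r)`. -/
noncomputable def iterInt (μ : Measure Y) (f : ℕ → Y → Y → X → A → ℝ)
    (φ : (ℕ → Y) → (ℕ → X) → ℝ) (a : A) (x : ℕ → X) :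
    ℕ → ℕ → (ℕ → Y) → ℝ
  | 0, _, y => φ y x
  | n + 1, t, y =>
      ∫ yt, f t yt (y (t - 1)) (x t) a *
        iterInt μ f φ a x n (t + 1) (Function.update y t yt) ∂μ

/-- Expected value of `φ(Y^T, X^T)` given heterogeneity `a` and the history up to
period `t`, with `n` outcome periods remaining, under the feedback kernels `g`. -/
noncomputable def pathInt (μ : Measure Y) (f : ℕ → Y → Y → X → A → ℝ)
    (g : ℕ → Kernel ((ℕ → Y) × (ℕ → X) × A) X)
    (φ : (ℕ → Y) → (ℕ → X) → ℝ) (a : A) :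
    ℕ → ℕ → (ℕ → Y) → (ℕ → X) → ℝ
  | 0, _, y, x => φ y x
  | 1, t, y, x =>
      ∫ yt, f t yt (y (t - 1)) (x t) a * φ (Function.update y t yt) x ∂μ
  | n + 2, t, y, x =>
      ∫ yt, f t yt (y (t - 1)) (x t) a *
        ∫ xt, pathInt μ f g φ a (n + 1) (t + 1) (Function.update y t yt)
            (Function.update x (t + 1) xt)
          ∂(g (t + 1) (Function.update y t yt, x, a)) ∂μ

/-- `ℝ≥0∞`-valued analogue of `pathInt`. -/
noncomputable def pathLint (μ : Measure Y) (f : ℕ → Y → Y → X → A → ℝ)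
    (g : ℕ → Kernel ((ℕ → Y) × (ℕ → X) × A) X)
    (φ : (ℕ → Y) → (ℕ → X) → ℝ≥0∞) (a : A) :
    ℕ → ℕ → (ℕ → Y) → (ℕ → X) → ℝ≥0∞
  | 0, _, y, x => φ y x
  | 1, t, y, x =>
      ∫⁻ yt, ENNReal.ofReal (f t yt (y (t - 1)) (x t) a) * φ (Function.update y t yt) x ∂μ
  | n + 2, t, y, x =>
      ∫⁻ yt, ENNReal.ofReal (f t yt (y (t - 1)) (x t) a) *
        ∫⁻ xt, pathLint μ f g φ a (n + 1) (t + 1) (Function.update y t yt)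
            (Function.update x (t + 1) xt)
          ∂(g (t + 1) (Function.update y t yt, x, a)) ∂μ

end Framework

section WeibullMPH

variable {k : ℕ}

/-- `ρ_θ(y, y₋, x) = y^α e^{γ y₋ + x'β}` in the Weibull MPH model. -/
noncomputable def weibullRho (α γ : ℝ) (β : Fin k → ℝ) (y ylag : ℝ) (x : Fin k → ℝ) : ℝ :=
  y ^ α * Real.exp (γ * ylag + ∑ i, x i * β i)

/-- Conditional duration density of the Weibull MPH model:
`f_θ(y | y₋, x, a) = α y^{α−1} e^{γ y₋ + x'β + a} exp(−y^α e^{γ y₋ + x'β + a})`. -/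
noncomputable def weibullDensity (α γ : ℝ) (β : Fin k → ℝ)
    (y ylag : ℝ) (x : Fin k → ℝ) (a : ℝ) : ℝ :=
  α * y ^ (α - 1) * Real.exp (γ * ylag + ∑ i, x i * β i + a) *
    Real.exp (-(y ^ α * Real.exp (γ * ylag + ∑ i, x i * β i + a)))

/-- `p̄ = Σ_{t=1}^T ρ_θ(y_t, y_{t−1}, x_t)` along a trajectory. -/
noncomputable def weibullPbar (α γ : ℝ) (β : Fin k → ℝ) (T : ℕ)
    (y : ℕ → ℝ) (x : ℕ → Fin k → ℝ) : ℝ :=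
  ∑ t ∈ Finset.Icc 1 T, weibullRho α γ β (y t) (y (t - 1)) (x t)


/-! ### Auxiliary analysis lemmas -/

namespace FHRAux

open scoped Nat

lemma integrableOn_pow_exp_poly (j m : ℕ) (A B : ℝ) :
    IntegrableOn (fun u : ℝ => u ^ j * Real.exp (-u) * (A + B * u) ^ m) (Ioi 0) := by
  have base : ∀ i : ℕ, IntegrableOn (fun u : ℝ => u ^ i * Real.exp (-u)) (Ioi 0) := by
    intro i
    have h := Real.GammaIntegral_convergent (s := (i : ℝ) + 1) (by positivity)
    refine h.congr_fun ?_ measurableSet_Ioi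
    intro u hu
    simp only [add_sub_cancel_right]
    rw [Real.rpow_natCast]
    ring
  have hfun : (fun u : ℝ => u ^ j * Real.exp (-u) * (A + B * u) ^ m)
      = fun u : ℝ => ∑ i ∈ Finset.range (m + 1),
        (A ^ i * B ^ (m - i) * (m.choose i : ℝ)) * (u ^ (j + (m - i)) * Real.exp (-u)) := by
    funext u
    rw [add_pow, Finset.mul_sum]
    refine Finset.sum_congr rfl fun i _ => ?_
    rw [mul_pow, pow_add]
    ring
  rw [hfun]
  exact integrable_finset_sum _ fun i _ => (base (j + (m - i))).const_mul _

lemma rpow_le_one_add_pow {x p : ℝ} (hx : 0 ≤ x) (hp : 0 ≤ p) {m : ℕ} (hpm : p ≤ m) :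
    x ^ p ≤ 1 + x ^ m := by
  rcases le_total x 1 with h | h
  · have h2 : (0:ℝ) ≤ x ^ m := pow_nonneg hx m
    linarith [Real.rpow_le_one hx h hp]
  · have h1 : x ^ p ≤ x ^ (m : ℝ) := Real.rpow_le_rpow_of_exponent_le h hpm
    rw [Real.rpow_natCast] at h1
    linarith

lemma integrableOn_pow_exp_rpow {p d : ℝ} (hp : 0 < p) (hd : 0 < d) (j : ℕ) {c : ℝ}
    (hc : 0 ≤ c) :
    IntegrableOn (fun u : ℝ => u ^ j * Real.exp (-u) * (c + u * d) ^ p) (Ioi 0) := by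
  set m := ⌈p⌉₊ with hm
  have hmaj : IntegrableOn
      (fun u : ℝ => u ^ j * Real.exp (-u) + u ^ j * Real.exp (-u) * (c + d * u) ^ m)
      (Ioi 0) := by
    have h1 := integrableOn_pow_exp_poly j 0 c d
    have h2 := integrableOn_pow_exp_poly j m c d
    have h3 := h1.add h2
    simp only [pow_zero, mul_one] at h3
    exact h3
  refine hmaj.mono' ?_ ?_
  · apply Measurable.aestronglyMeasurable
    have hcont : Continuous fun u : ℝ => (c + u * d) ^ p :=
      (continuous_const.add (continuous_id.mul continuous_const)).rpow_const
        fun x => Or.inr hp.le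
    exact ((measurable_id.pow_const j).mul (measurable_neg.exp)).mul hcont.measurable
  · filter_upwards [ae_restrict_mem measurableSet_Ioi] with u hu
    have hu0 : (0:ℝ) < u := hu
    have hcu : (0:ℝ) ≤ c + u * d := by positivity
    have hnn : (0:ℝ) ≤ u ^ j * Real.exp (-u) * (c + u * d) ^ p := by positivity
    rw [Real.norm_eq_abs, abs_of_nonneg hnn]
    have hb : (c + u * d) ^ p ≤ 1 + (c + u * d) ^ m :=
      rpow_le_one_add_pow hcu hp.le (Nat.le_ceil p)
    have hpos : (0:ℝ) ≤ u ^ j * Real.exp (-u) := by positivity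
    calc u ^ j * Real.exp (-u) * (c + u * d) ^ p
        ≤ u ^ j * Real.exp (-u) * (1 + (c + u * d) ^ m) :=
          mul_le_mul_of_nonneg_left hb hpos
      _ = u ^ j * Real.exp (-u) + u ^ j * Real.exp (-u) * (c + d * u) ^ m := by
          rw [mul_comm d u]; ring

/-- The iterated exponential integral of `c ↦ c ^ p`. -/
noncomputable def Ifun (p d : ℝ) : ℕ → ℝ → ℝ
  | 0, c => c ^ p
  | n + 1, c => ∫ u in Ioi (0:ℝ), Real.exp (-u) * Ifun p d n (c + u * d)

lemma Ifun_prop (p d : ℝ) (hp : 0 < p) (hd : 0 < d) (n : ℕ) :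
    Measurable (Ifun p d n) ∧
      ∃ C : ℝ, 0 ≤ C ∧ ∀ c : ℝ, |Ifun p d n c| ≤ C * (1 + |c|) ^ (⌈p⌉₊) := by
  set m := ⌈p⌉₊ with hm
  induction n with
  | zero =>
    constructor
    · exact (Real.continuous_rpow_const hp.le).measurable
    · refine ⟨2, by norm_num, fun c => ?_⟩
      have h1 : |Ifun p d 0 c| ≤ |c| ^ p := by
        simpa [Ifun] using Real.abs_rpow_le_abs_rpow c p
      have h2 : |c| ^ p ≤ 1 + |c| ^ m :=
        rpow_le_one_add_pow (abs_nonneg c) hp.le (Nat.le_ceil p)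
      have h3 : |c| ^ m ≤ (1 + |c|) ^ m :=
        pow_le_pow_left₀ (abs_nonneg c) (by linarith [abs_nonneg c]) m
      have h4 : (1:ℝ) ≤ (1 + |c|) ^ m :=
        one_le_pow₀ (by linarith [abs_nonneg c])
      nlinarith
  | succ n ih =>
    obtain ⟨hmeas, C, hC0, hC⟩ := ih
    have hbd : ∀ c : ℝ, ∀ u ∈ Ioi (0:ℝ),
        |Real.exp (-u) * Ifun p d n (c + u * d)| ≤
          C * (Real.exp (-u) * ((1 + |c|) + ((1 + |c|) * d) * u) ^ m) := by
      intro c u hu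
      have hu0 : (0:ℝ) < u := hu
      have h1 : |Ifun p d n (c + u * d)| ≤ C * (1 + |c + u * d|) ^ m := hC _
      have h2 : 1 + |c + u * d| ≤ (1 + |c|) + ((1 + |c|) * d) * u := by
        have habs := abs_add_le c (u * d)
        have h3 : |u * d| = u * d := abs_of_nonneg (by positivity)
        have h4 : u * d ≤ (1 + |c|) * d * u := by
          nlinarith [mul_nonneg (abs_nonneg c) (mul_pos hd hu0).le]
        linarith
      have h4 : (1 + |c + u * d|) ^ m ≤ ((1 + |c|) + ((1 + |c|) * d) * u) ^ m :=
        pow_le_pow_left₀ (by positivity) h2 m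
      rw [abs_mul, abs_of_nonneg (Real.exp_nonneg _)]
      calc Real.exp (-u) * |Ifun p d n (c + u * d)|
          ≤ Real.exp (-u) * (C * ((1 + |c|) + ((1 + |c|) * d) * u) ^ m) := by
            refine mul_le_mul_of_nonneg_left (h1.trans ?_) (Real.exp_nonneg _)
            exact mul_le_mul_of_nonneg_left h4 hC0
        _ = C * (Real.exp (-u) * ((1 + |c|) + ((1 + |c|) * d) * u) ^ m) := by ring
    have hmajInt : ∀ c : ℝ, IntegrableOn
        (fun u : ℝ => C * (Real.exp (-u) * ((1 + |c|) + ((1 + |c|) * d) * u) ^ m)) (Ioi 0) := by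
      intro c
      have := (integrableOn_pow_exp_poly 0 m (1 + |c|) ((1 + |c|) * d)).const_mul C
      simpa [IntegrableOn] using this
    constructor
    · have hSM : StronglyMeasurable
          (fun q : ℝ × ℝ => Real.exp (-q.2) * Ifun p d n (q.1 + q.2 * d)) := by
        refine Measurable.stronglyMeasurable ?_
        exact (measurable_snd.neg.exp).mul
          (hmeas.comp (measurable_fst.add (measurable_snd.mul_const d)))
      have := hSM.integral_prod_right' (ν := volume.restrict (Ioi (0:ℝ)))
      exact this.measurable
    · set D := ∫ u in Ioi (0:ℝ), Real.exp (-u) * (1 + d * u) ^ m with hD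
      have hD0 : 0 ≤ D := by
        refine setIntegral_nonneg measurableSet_Ioi fun u hu => ?_
        have : (0:ℝ) < u := hu
        positivity
      refine ⟨C * D, mul_nonneg hC0 hD0, fun c => ?_⟩
      have h1 : |Ifun p d (n+1) c| ≤
          ∫ u in Ioi (0:ℝ), C * (Real.exp (-u) * ((1 + |c|) + ((1 + |c|) * d) * u) ^ m) := by
        have h2 := norm_integral_le_integral_norm
          (μ := volume.restrict (Ioi (0:ℝ)))
          (f := fun u : ℝ => Real.exp (-u) * Ifun p d n (c + u * d))
        rw [show Ifun p d (n+1) c = ∫ u in Ioi (0:ℝ), Real.exp (-u) * Ifun p d n (c + u * d)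
          from rfl]
        refine (h2.trans ?_)
        refine integral_mono_of_nonneg ?_ (hmajInt c) ?_
        · filter_upwards with u using norm_nonneg _
        · filter_upwards [ae_restrict_mem measurableSet_Ioi] with u hu
          rw [Real.norm_eq_abs]
          exact hbd c u hu
      have h5 : ∀ u ∈ Ioi (0:ℝ),
          C * (Real.exp (-u) * ((1 + |c|) + ((1 + |c|) * d) * u) ^ m)
            = (C * (1 + |c|) ^ m) * (Real.exp (-u) * (1 + d * u) ^ m) := by
        intro u hu
        have he : (1 + |c|) + ((1 + |c|) * d) * u = (1 + |c|) * (1 + d * u) := by ring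
        rw [he, mul_pow]
        ring
      have h6 : (∫ u in Ioi (0:ℝ), C * (Real.exp (-u) * ((1 + |c|) + ((1 + |c|) * d) * u) ^ m))
          = (C * (1 + |c|) ^ m) * D := by
        rw [setIntegral_congr_fun measurableSet_Ioi h5, hD, ← integral_const_mul]
      calc |Ifun p d (n+1) c| ≤ _ := h1
        _ = (C * (1 + |c|) ^ m) * D := h6
        _ = (C * D) * (1 + |c|) ^ m := by ring

/-- Integrability of the `Ifun` recursion integrand. -/
lemma Ifun_exp_integrableOn {p d : ℝ} (hp : 0 < p) (hd : 0 < d) (n : ℕ) (c : ℝ) :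
    IntegrableOn (fun u : ℝ => Real.exp (-u) * Ifun p d n (c + u * d)) (Ioi 0) := by
  obtain ⟨hmeas, C, hC0, hC⟩ := Ifun_prop p d hp hd n
  set m := ⌈p⌉₊ with hm
  have hmajInt : IntegrableOn
      (fun u : ℝ => C * (Real.exp (-u) * ((1 + |c|) + ((1 + |c|) * d) * u) ^ m)) (Ioi 0) := by
    have := (integrableOn_pow_exp_poly 0 m (1 + |c|) ((1 + |c|) * d)).const_mul C
    simpa [IntegrableOn] using this
  refine hmajInt.mono' ?_ ?_
  · exact ((measurable_neg.exp).mul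
      (hmeas.comp (measurable_const.add (measurable_id.mul_const d)))).aestronglyMeasurable
  · filter_upwards [ae_restrict_mem measurableSet_Ioi] with u hu
    have hu0 : (0:ℝ) < u := hu
    have h1 : |Ifun p d n (c + u * d)| ≤ C * (1 + |c + u * d|) ^ m := hC _
    have h2 : 1 + |c + u * d| ≤ (1 + |c|) + ((1 + |c|) * d) * u := by
      have habs := abs_add_le c (u * d)
      have h3 : |u * d| = u * d := abs_of_nonneg (by positivity)
      have h4 : u * d ≤ (1 + |c|) * d * u := by
        nlinarith [mul_nonneg (abs_nonneg c) (mul_pos hd hu0).le]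
      linarith
    have h4 : (1 + |c + u * d|) ^ m ≤ ((1 + |c|) + ((1 + |c|) * d) * u) ^ m :=
      pow_le_pow_left₀ (by positivity) h2 m
    rw [Real.norm_eq_abs, abs_mul, abs_of_nonneg (Real.exp_nonneg _)]
    calc Real.exp (-u) * |Ifun p d n (c + u * d)|
        ≤ Real.exp (-u) * (C * ((1 + |c|) + ((1 + |c|) * d) * u) ^ m) := by
          refine mul_le_mul_of_nonneg_left (h1.trans ?_) (Real.exp_nonneg _)
          exact mul_le_mul_of_nonneg_left h4 hC0
      _ = C * (Real.exp (-u) * ((1 + |c|) + ((1 + |c|) * d) * u) ^ m) := by ring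

/-- Translation of integrals on `Ioi`. -/
lemma integral_Ioi_shift (g : ℝ → ℝ) (u : ℝ) :
    ∫ w in Ioi u, g w = ∫ v in Ioi (0:ℝ), g (v + u) := by
  have h1 : MeasurePreserving (fun x : ℝ => x + u) volume volume :=
    measurePreserving_add_right volume u
  have h2 : MeasurableEmbedding (fun x : ℝ => x + u) :=
    (MeasurableEquiv.addRight u).measurableEmbedding
  have h3 := h1.setIntegral_image_emb h2 g (Ioi 0)
  rw [image_add_const_Ioi, zero_add] at h3
  exact h3

lemma integrableOn_Ioi_shift {g : ℝ → ℝ} {u : ℝ}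
    (h : IntegrableOn (fun v => g (v + u)) (Ioi (0:ℝ))) : IntegrableOn g (Ioi u) := by
  have h1 : MeasurePreserving (fun x : ℝ => x + u) volume volume :=
    measurePreserving_add_right volume u
  have h2 : MeasurableEmbedding (fun x : ℝ => x + u) :=
    (MeasurableEquiv.addRight u).measurableEmbedding
  have h3 := (h1.integrableOn_image (f := g) h2 (s := Ioi (0:ℝ)))
  rw [image_add_const_Ioi, zero_add] at h3
  exact h3.mpr h

/-- Substitution `v = y ^ α * E` on `Ioi 0`. -/
lemma integral_comp_weibull {α E : ℝ} (hα : 0 < α) (hE : 0 < E) (F : ℝ → ℝ) :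
    ∫ y in Ioi (0:ℝ), α * y ^ (α - 1) * E * F (y ^ α * E) = ∫ v in Ioi (0:ℝ), F v := by
  set q := E ^ (1/α) with hqdef
  have hq : 0 < q := Real.rpow_pos_of_pos hE _
  have hqα : q ^ α = E := by
    rw [hqdef, ← Real.rpow_mul hE.le, one_div_mul_cancel hα.ne', Real.rpow_one]
  have key2 := integral_comp_mul_right_Ioi
    (fun z : ℝ => α * z ^ (α - 1) * F (z ^ α)) 0 hq
  simp only [zero_mul, smul_eq_mul] at key2
  have key1 : ∫ z in Ioi (0:ℝ), α * z ^ (α - 1) * F (z ^ α) = ∫ v in Ioi (0:ℝ), F v := by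
    have h := integral_comp_rpow_Ioi_of_pos (g := F) hα
    rw [← h]
    refine setIntegral_congr_fun measurableSet_Ioi fun z hz => ?_
    simp [smul_eq_mul, mul_assoc]
  have hpt : ∀ y ∈ Ioi (0:ℝ),
      α * y ^ (α - 1) * E * F (y ^ α * E) = q * (α * (y * q) ^ (α - 1) * F ((y * q) ^ α)) := by
    intro y hy
    have hy0 : (0:ℝ) < y := hy
    have e1 : (y * q) ^ (α - 1) = y ^ (α - 1) * q ^ (α - 1) :=
      Real.mul_rpow hy0.le hq.le
    have e2 : (y * q) ^ α = y ^ α * q ^ α := Real.mul_rpow hy0.le hq.le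
    have e3 : q * q ^ (α - 1) = E := by
      have h4 : q * q ^ (α - 1) = q ^ ((1:ℝ) + (α - 1)) := by
        rw [Real.rpow_add hq, Real.rpow_one]
      rw [h4, show (1:ℝ) + (α - 1) = α by ring, hqα]
    rw [e1, e2, hqα]
    calc α * y ^ (α - 1) * E * F (y ^ α * E)
        = (q * q ^ (α - 1)) * (α * y ^ (α - 1)) * F (y ^ α * E) := by rw [e3]; ring
      _ = q * (α * (y ^ (α - 1) * q ^ (α - 1)) * F (y ^ α * E)) := by ring
  calc ∫ y in Ioi (0:ℝ), α * y ^ (α - 1) * E * F (y ^ α * E)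
      = ∫ y in Ioi (0:ℝ), q * (α * (y * q) ^ (α - 1) * F ((y * q) ^ α)) :=
        setIntegral_congr_fun measurableSet_Ioi hpt
    _ = q * ∫ y in Ioi (0:ℝ), α * (y * q) ^ (α - 1) * F ((y * q) ^ α) := integral_const_mul _ _
    _ = q * (q⁻¹ * ∫ z in Ioi (0:ℝ), α * z ^ (α - 1) * F (z ^ α)) := by rw [key2]
    _ = ∫ z in Ioi (0:ℝ), α * z ^ (α - 1) * F (z ^ α) := by field_simp
    _ = ∫ v in Ioi (0:ℝ), F v := key1

/-- Substitution `u = v * b` (exponential scaling). -/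
lemma integral_exp_scale {b : ℝ} (hb : 0 < b) (G : ℝ → ℝ) :
    ∫ v in Ioi (0:ℝ), b * Real.exp (-(v * b)) * G v
      = ∫ u in Ioi (0:ℝ), Real.exp (-u) * G (u / b) := by
  have key := integral_comp_mul_right_Ioi (fun u : ℝ => Real.exp (-u) * G (u / b)) 0 hb
  simp only [zero_mul, smul_eq_mul] at key
  have hpt : ∀ v ∈ Ioi (0:ℝ),
      Real.exp (-(v * b)) * G (v * b / b) = Real.exp (-(v * b)) * G v := by
    intro v _
    rw [mul_div_cancel_right₀ _ hb.ne']
  rw [setIntegral_congr_fun measurableSet_Ioi hpt] at key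
  calc ∫ v in Ioi (0:ℝ), b * Real.exp (-(v * b)) * G v
      = b * ∫ v in Ioi (0:ℝ), Real.exp (-(v * b)) * G v := by
        rw [← integral_const_mul]
        exact setIntegral_congr_fun measurableSet_Ioi fun v _ => by ring
    _ = b * (b⁻¹ * ∫ u in Ioi (0:ℝ), Real.exp (-u) * G (u / b)) := by rw [key]
    _ = ∫ u in Ioi (0:ℝ), Real.exp (-u) * G (u / b) := by field_simp

/-- Master substitution: Weibull density integral to exponential integral. -/
lemma weibull_subst {α E b : ℝ} (hα : 0 < α) (hE : 0 < E) (hb : 0 < b) (G : ℝ → ℝ) :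
    ∫ y in Ioi (0:ℝ),
        α * y ^ (α - 1) * E * b * Real.exp (-(y ^ α * E * b)) * G (y ^ α * E)
      = ∫ u in Ioi (0:ℝ), Real.exp (-u) * G (u / b) := by
  have h1 := integral_comp_weibull hα hE (fun v => b * Real.exp (-(v * b)) * G v)
  rw [← integral_exp_scale hb G, ← h1]
  exact setIntegral_congr_fun measurableSet_Ioi fun y _ => by ring

/-- Gamma-integral formula for `Ifun`. -/
lemma Ifun_succ_eq (p d : ℝ) (hp : 0 < p) (hd : 0 < d) :
    ∀ n : ℕ, ∀ c : ℝ, 0 ≤ c →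
      Ifun p d (n + 1) c
        = (n ! : ℝ)⁻¹ * ∫ u in Ioi (0:ℝ), u ^ n * Real.exp (-u) * (c + u * d) ^ p := by
  intro n
  induction n with
  | zero =>
    intro c _
    simp only [Ifun, Nat.factorial_zero, Nat.cast_one, inv_one, one_mul, pow_zero]
  | succ n ih =>
    intro c hc
    set f : ℝ → ℝ → ℝ := fun u w => (w - u) ^ n * Real.exp (-w) * (c + w * d) ^ p with hfdef
    set Φ : ℝ → ℝ → ℝ := fun u w => indicator (Ioi u) (f u) w with hΦdef
    have h3 : ∀ u v : ℝ, f u (v + u)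
        = Real.exp (-u) * (v ^ n * Real.exp (-v) * ((c + u * d) + v * d) ^ p) := by
      intro u v
      have e1 : v + u - u = v := by ring
      have e2 : Real.exp (-(v + u)) = Real.exp (-v) * Real.exp (-u) := by
        rw [← Real.exp_add]; ring_nf
      have e3 : c + (v + u) * d = (c + u * d) + v * d := by ring
      simp only [hfdef, e1, e2, e3]
      ring
    have claimA : ∀ u ∈ Ioi (0:ℝ), ∫ w in Ioi (0:ℝ), Φ u w
        = Real.exp (-u) * ∫ v in Ioi (0:ℝ), v ^ n * Real.exp (-v) * ((c + u * d) + v * d) ^ p := by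
      intro u hu
      have h1 : ∫ w in Ioi (0:ℝ), Φ u w = ∫ w in Ioi u, f u w := by
        rw [hΦdef]
        rw [setIntegral_indicator measurableSet_Ioi, Ioi_inter_Ioi,
          max_eq_right (le_of_lt hu)]
      rw [h1, integral_Ioi_shift (f u) u]
      simp only [h3]
      rw [integral_const_mul]
    have hcu : ∀ u : ℝ, u ∈ Ioi (0:ℝ) → (0:ℝ) ≤ c + u * d := by
      intro u hu
      have : (0:ℝ) < u := hu
      positivity
    have claimInt : Integrable (uncurry Φ)
        ((volume.restrict (Ioi (0:ℝ))).prod (volume.restrict (Ioi (0:ℝ)))) := by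
      have hmeasΦ : Measurable (uncurry Φ) := by
        have heq : uncurry Φ = fun q : ℝ × ℝ => indicator {q : ℝ × ℝ | q.1 < q.2}
            (fun q : ℝ × ℝ => (q.2 - q.1) ^ n * Real.exp (-q.2) * (c + q.2 * d) ^ p) q := by
          funext q
          rcases q with ⟨u, w⟩
          by_cases h : u < w <;>
            simp [uncurry, hΦdef, hfdef, indicator, Set.mem_Ioi, Set.mem_setOf_eq, h]
        rw [heq]
        refine Measurable.indicator ?_ (measurableSet_lt measurable_fst measurable_snd)
        refine (((measurable_snd.sub measurable_fst).pow_const n).mul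
          (measurable_snd.neg.exp)).mul ?_
        exact (Real.continuous_rpow_const hp.le).measurable.comp
          (measurable_const.add (measurable_snd.mul_const d))
      rw [integrable_prod_iff hmeasΦ.aestronglyMeasurable]
      constructor
      · filter_upwards [ae_restrict_mem measurableSet_Ioi] with u hu
        have h4 : IntegrableOn (f u) (Ioi u) := by
          apply integrableOn_Ioi_shift
          have heq2 : (fun v => f u (v + u)) = fun v =>
              Real.exp (-u) * (v ^ n * Real.exp (-v) * ((c + u * d) + v * d) ^ p) :=
            funext (h3 u)
          rw [heq2]
          exact (integrableOn_pow_exp_rpow hp hd n (hcu u hu)).const_mul _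
        have h5 : (volume.restrict (Ioi (0:ℝ))).restrict (Ioi u) = volume.restrict (Ioi u) := by
          rw [Measure.restrict_restrict measurableSet_Ioi,
            inter_eq_left.mpr (Ioi_subset_Ioi (le_of_lt hu))]
        show Integrable (fun w => Φ u w) (volume.restrict (Ioi (0:ℝ)))
        rw [hΦdef]
        rw [integrable_indicator_iff measurableSet_Ioi]
        unfold IntegrableOn
        rw [h5]
        exact h4
      · have key : ∀ u ∈ Ioi (0:ℝ), (∫ w, ‖Φ u w‖ ∂(volume.restrict (Ioi (0:ℝ))))
            = (n ! : ℝ) * (Real.exp (-u) * Ifun p d (n + 1) (c + u * d)) := by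
          intro u hu
          have hnorm : ∀ w, ‖Φ u w‖ = Φ u w := by
            intro w
            rw [Real.norm_eq_abs, abs_of_nonneg]
            refine indicator_nonneg (fun w hw => ?_) w
            have h6 : u < w := hw
            have h7 : (0:ℝ) < u := hu
            have hw0 : (0:ℝ) < w := lt_trans h7 h6
            have h8 : (0:ℝ) ≤ c + w * d := add_nonneg hc (mul_pos hw0 hd).le
            have h9 : (0:ℝ) ≤ (w - u) ^ n := pow_nonneg (sub_nonneg.mpr h6.le) n
            exact mul_nonneg (mul_nonneg h9 (Real.exp_nonneg _)) (Real.rpow_nonneg h8 _)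
          simp only [hnorm]
          rw [claimA u hu, ih (c + u * d) (hcu u hu)]
          have hfact : (0:ℝ) < (n ! : ℝ) := by positivity
          field_simp
          exact setIntegral_congr_fun measurableSet_Ioi fun v _ => by rw [mul_comm d v]
        refine Integrable.congr
          (f := fun u => (n ! : ℝ) * (Real.exp (-u) * Ifun p d (n + 1) (c + u * d))) ?_ ?_
        · exact ((Ifun_exp_integrableOn hp hd (n + 1) c).const_mul (n ! : ℝ))
        · filter_upwards [ae_restrict_mem measurableSet_Ioi] with u hu
          exact (key u hu).symm
    have swap := integral_integral_swap claimInt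
    have claimC : (∫ w in Ioi (0:ℝ), ∫ u in Ioi (0:ℝ), Φ u w)
        = ∫ w in Ioi (0:ℝ), (w ^ (n + 1) / ((n:ℝ) + 1)) * Real.exp (-w) * (c + w * d) ^ p := by
      refine setIntegral_congr_fun measurableSet_Ioi fun w hw => ?_
      have h6 : ∀ u, Φ u w
          = indicator (Iio w) (fun u => (w - u) ^ n * Real.exp (-w) * (c + w * d) ^ p) u := by
        intro u
        by_cases h : u < w <;>
          simp [hΦdef, hfdef, indicator, Set.mem_Ioi, Set.mem_Iio, h]
      simp only [h6]
      rw [setIntegral_indicator measurableSet_Iio, Ioi_inter_Iio]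
      have h7 : (∫ u in Ioo (0:ℝ) w, (w - u) ^ n * Real.exp (-w) * (c + w * d) ^ p)
          = (∫ u in Ioo (0:ℝ) w, (w - u) ^ n) * (Real.exp (-w) * (c + w * d) ^ p) := by
        rw [← integral_mul_const]
        exact setIntegral_congr_fun measurableSet_Ioo fun u _ => by ring
      have h8 : (∫ u in Ioo (0:ℝ) w, (w - u) ^ n) = w ^ (n + 1) / ((n:ℝ) + 1) := by
        rw [← integral_Ioc_eq_integral_Ioo, ← intervalIntegral.integral_of_le (le_of_lt hw),
          intervalIntegral.integral_comp_sub_left (fun x => x ^ n) w]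
        simp [integral_pow]
      rw [h7, h8]
      ring
    have hstep : Ifun p d (n + 2) c
        = ∫ u in Ioi (0:ℝ), (n ! : ℝ)⁻¹ * ∫ w in Ioi (0:ℝ), Φ u w := by
      show (∫ u in Ioi (0:ℝ), Real.exp (-u) * Ifun p d (n + 1) (c + u * d)) = _
      refine setIntegral_congr_fun measurableSet_Ioi fun u hu => ?_
      rw [ih (c + u * d) (hcu u hu), claimA u hu]
      ring
    rw [hstep]
    rw [integral_const_mul, swap, claimC]
    have h9 : (∫ w in Ioi (0:ℝ), (w ^ (n + 1) / ((n:ℝ) + 1)) * Real.exp (-w) * (c + w * d) ^ p)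
        = ((n:ℝ) + 1)⁻¹ * ∫ w in Ioi (0:ℝ), w ^ (n + 1) * Real.exp (-w) * (c + w * d) ^ p := by
      rw [← integral_const_mul]
      exact setIntegral_congr_fun measurableSet_Ioi fun w _ => by ring
    rw [h9, Nat.factorial_succ]
    push_cast
    rw [← mul_assoc, ← mul_inv]
    ring_nf
    congr 1
    exact setIntegral_congr_fun measurableSet_Ioi fun w _ => by rw [add_comm (w * d) c, mul_comm w d]

/-- Value of `Ifun` at `0`. -/
lemma Ifun_top {p d : ℝ} (hp : 0 < p) (hd : 0 < d) (T : ℕ) (hT : 1 ≤ T) :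
    Ifun p d T 0 = d ^ p * (Real.Gamma ((T:ℝ) + p) / Real.Gamma (T:ℝ)) := by
  obtain ⟨n, rfl⟩ : ∃ n, T = n + 1 := ⟨T - 1, by omega⟩
  rw [Ifun_succ_eq p d hp hd n 0 le_rfl]
  have hpt : ∀ u ∈ Ioi (0:ℝ), u ^ n * Real.exp (-u) * ((0:ℝ) + u * d) ^ p
      = d ^ p * (Real.exp (-u) * u ^ (((n:ℝ) + 1 + p) - 1)) := by
    intro u hu
    have hu0 : (0:ℝ) < u := hu
    rw [zero_add, Real.mul_rpow hu0.le hd.le]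
    have e1 : u ^ (((n:ℝ) + 1 + p) - 1) = u ^ (n:ℝ) * u ^ p := by
      rw [← Real.rpow_add hu0]
      ring_nf
    rw [e1, Real.rpow_natCast]
    ring
  rw [setIntegral_congr_fun measurableSet_Ioi hpt, integral_const_mul,
    ← Real.Gamma_eq_integral (by positivity : (0:ℝ) < (n:ℝ) + 1 + p)]
  have h2 : Real.Gamma ((n:ℕ) + 1 : ℝ) = (n ! : ℝ) := Real.Gamma_nat_eq_factorial n
  have h3 : ((n + 1 : ℕ) : ℝ) = (n : ℝ) + 1 := by push_cast; ring
  rw [h3, h2]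
  have h4 : (0:ℝ) < (n ! : ℝ) := by positivity
  field_simp

end FHRAux

section ModelAux

open FHRAux

variable {k : ℕ}

/-- Partial sum of Weibull hazards up to period `t`. -/
noncomputable def pSum (α γ : ℝ) (β : Fin k → ℝ) (t : ℕ) (y : ℕ → ℝ) (x : ℕ → Fin k → ℝ) : ℝ :=
  ∑ r ∈ Finset.Icc 1 t, weibullRho α γ β (y r) (y (r - 1)) (x r)

lemma pSum_update {α γ : ℝ} {β : Fin k → ℝ} {t : ℕ} (ht : 1 ≤ t)
    (y : ℕ → ℝ) (x : ℕ → Fin k → ℝ) (yt : ℝ) :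
    pSum α γ β t (Function.update y t yt) x
      = pSum α γ β (t - 1) y x + weibullRho α γ β yt (y (t - 1)) (x t) := by
  obtain ⟨s, rfl⟩ : ∃ s, t = s + 1 := ⟨t - 1, by omega⟩
  unfold pSum
  rw [Finset.sum_Icc_succ_top (by omega : 1 ≤ s + 1)]
  congr 1
  · refine Finset.sum_congr rfl fun r hr => ?_
    have hr' : 1 ≤ r ∧ r ≤ s := by simpa using Finset.mem_Icc.mp hr
    rw [Function.update_of_ne (by omega) _ y, Function.update_of_ne (by omega) _ y]
  · rw [Function.update_self, Function.update_of_ne (by omega) _ y]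

lemma pSum_congr_x {α γ : ℝ} {β : Fin k → ℝ} {t : ℕ} (y : ℕ → ℝ) {x x' : ℕ → Fin k → ℝ}
    (h : ∀ r, 1 ≤ r → r ≤ t → x r = x' r) :
    pSum α γ β t y x = pSum α γ β t y x' := by
  refine Finset.sum_congr rfl fun r hr => ?_
  have hr' := Finset.mem_Icc.mp hr
  rw [h r hr'.1 hr'.2]

/-- Key computation for `iterInt`. -/
lemma iterInt_key {k : ℕ} {α : ℝ} (hα : 0 < α) (γ : ℝ) (β : Fin k → ℝ) (T : ℕ)
    (c1 c2 a : ℝ) :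
    ∀ n t : ℕ, 1 ≤ t → t + n = T + 1 → ∀ (x : ℕ → Fin k → ℝ) (y : ℕ → ℝ),
      iterInt (volume.restrict (Set.Ioi (0:ℝ)))
        (fun _ y' ylag x'' a' => weibullDensity α γ β y' ylag x'' a')
        (fun y' x'' => c1 * weibullPbar α γ β T y' x'' ^ (1 / α) - c2) a x n t y
      = c1 * Ifun (1/α) (Real.exp (-a)) n (pSum α γ β (t - 1) y x) - c2 := by
  intro n
  induction n with
  | zero =>
    intro t ht htn x y
    have ht' : t = T + 1 := by omega
    subst ht'
    simp only [iterInt, Ifun]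
    rfl
  | succ n ih =>
    intro t ht htn x y
    have hinner : ∀ yt : ℝ,
        iterInt (volume.restrict (Set.Ioi (0:ℝ)))
          (fun _ y' ylag x'' a' => weibullDensity α γ β y' ylag x'' a')
          (fun y' x'' => c1 * weibullPbar α γ β T y' x'' ^ (1 / α) - c2) a x n (t + 1)
          (Function.update y t yt)
        = c1 * Ifun (1/α) (Real.exp (-a))
            n (pSum α γ β (t - 1) y x + weibullRho α γ β yt (y (t - 1)) (x t)) - c2 := by
      intro yt
      rw [ih (t + 1) (by omega) (by omega) x (Function.update y t yt)]
      rw [show t + 1 - 1 = t from rfl, pSum_update ht y x yt]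
    simp only [iterInt, hinner]
    set E := Real.exp (γ * y (t - 1) + ∑ i, x t i * β i) with hE
    set b := Real.exp a with hb
    set c := pSum α γ β (t - 1) y x with hc
    have hEpos : 0 < E := Real.exp_pos _
    have hbpos : 0 < b := Real.exp_pos _
    have hint : ∀ yt : ℝ,
        weibullDensity α γ β yt (y (t - 1)) (x t) a *
          (c1 * Ifun (1/α) (Real.exp (-a)) n (c + weibullRho α γ β yt (y (t - 1)) (x t)) - c2)
        = α * yt ^ (α - 1) * E * b * Real.exp (-(yt ^ α * E * b)) *
            (c1 * Ifun (1/α) (Real.exp (-a)) n (c + yt ^ α * E) - c2) := by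
      intro yt
      unfold weibullDensity weibullRho
      rw [hE, hb]
      rw [show γ * y (t-1) + (∑ i, x t i * β i) + a
          = (γ * y (t-1) + ∑ i, x t i * β i) + a from rfl, Real.exp_add]
      ring_nf
    rw [integral_congr_ae (Filter.Eventually.of_forall hint)]
    rw [weibull_subst hα hEpos hbpos
      (fun v => c1 * Ifun (1/α) (Real.exp (-a)) n (c + v) - c2)]
    have hdiv : ∀ u : ℝ, u / b = u * Real.exp (-a) := by
      intro u; rw [hb, Real.exp_neg, div_eq_mul_inv]
    simp only [hdiv]
    have hsplit : ∀ u : ℝ,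
        Real.exp (-u) * (c1 * Ifun (1/α) (Real.exp (-a)) n (c + u * Real.exp (-a)) - c2)
        = c1 * (Real.exp (-u) * Ifun (1/α) (Real.exp (-a)) n (c + u * Real.exp (-a)))
          - c2 * Real.exp (-u) := by
      intro u; ring
    rw [integral_congr_ae (Filter.Eventually.of_forall hsplit)]
    have hi1 : IntegrableOn
        (fun u : ℝ => c1 * (Real.exp (-u) * Ifun (1/α) (Real.exp (-a))
          n (c + u * Real.exp (-a)))) (Set.Ioi 0) :=
      (Ifun_exp_integrableOn (by positivity) (Real.exp_pos _) n c).const_mul c1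
    have hi2 : IntegrableOn (fun u : ℝ => c2 * Real.exp (-u)) (Set.Ioi 0) := by
      have := (exp_neg_integrableOn_Ioi 0 (by norm_num : (0:ℝ) < 1)).const_mul c2
      simpa [IntegrableOn] using this
    rw [integral_sub hi1 hi2, integral_const_mul, integral_const_mul,
      integral_exp_neg_Ioi_zero, mul_one]
    rfl

end ModelAux

section ModelAux2
open FHRAux
variable {k : ℕ}

lemma weibull_int_step {α : ℝ} (hα : 0 < α) (γ : ℝ) (β : Fin k → ℝ)
    (a c c1 : ℝ) (ylag : ℝ) (xv : Fin k → ℝ) (n : ℕ) :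
    ∫ yt in Set.Ioi (0:ℝ), weibullDensity α γ β yt ylag xv a *
        (c1 * Ifun (1/α) (Real.exp (-a)) n (c + weibullRho α γ β yt ylag xv))
      = c1 * Ifun (1/α) (Real.exp (-a)) (n + 1) c := by
  set E := Real.exp (γ * ylag + ∑ i, xv i * β i) with hE
  set b := Real.exp a with hb
  have hEpos : 0 < E := Real.exp_pos _
  have hbpos : 0 < b := Real.exp_pos _
  have hint : ∀ yt : ℝ, weibullDensity α γ β yt ylag xv a *
      (c1 * Ifun (1/α) (Real.exp (-a)) n (c + weibullRho α γ β yt ylag xv))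
      = α * yt ^ (α - 1) * E * b * Real.exp (-(yt ^ α * E * b)) *
        (c1 * Ifun (1/α) (Real.exp (-a)) n (c + yt ^ α * E)) := by
    intro yt
    unfold weibullDensity weibullRho
    rw [hE, hb]
    rw [show γ * ylag + (∑ i, xv i * β i) + a
        = (γ * ylag + ∑ i, xv i * β i) + a from rfl, Real.exp_add]
    ring_nf
  rw [integral_congr_ae (Filter.Eventually.of_forall hint)]
  rw [weibull_subst hα hEpos hbpos
    (fun v => c1 * Ifun (1/α) (Real.exp (-a)) n (c + v))]
  have hdiv : ∀ u : ℝ, u / b = u * Real.exp (-a) := fun u => by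
    rw [hb, Real.exp_neg, div_eq_mul_inv]
  simp only [hdiv]
  have hpull : ∀ u : ℝ,
      Real.exp (-u) * (c1 * Ifun (1/α) (Real.exp (-a)) n (c + u * Real.exp (-a)))
      = c1 * (Real.exp (-u) * Ifun (1/α) (Real.exp (-a)) n (c + u * Real.exp (-a))) :=
    fun u => by ring
  rw [integral_congr_ae (Filter.Eventually.of_forall hpull), integral_const_mul]
  rfl

lemma pathInt_key {α : ℝ} (hα : 0 < α) (γ : ℝ) (β : Fin k → ℝ) (T : ℕ)
    (c1 a : ℝ) (g : ℕ → Kernel ((ℕ → ℝ) × (ℕ → Fin k → ℝ) × ℝ) (Fin k → ℝ))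
    (hg : ∀ t, IsMarkovKernel (g t)) :
    ∀ n t : ℕ, 1 ≤ t → t + (n + 1) = T + 1 → ∀ (x : ℕ → Fin k → ℝ) (y : ℕ → ℝ),
      pathInt (volume.restrict (Set.Ioi (0:ℝ)))
        (fun _ y' ylag x'' a' => weibullDensity α γ β y' ylag x'' a') g
        (fun y' x'' => c1 * weibullPbar α γ β T y' x'' ^ (1 / α)) a (n + 1) t y x
      = c1 * Ifun (1/α) (Real.exp (-a)) (n + 1) (pSum α γ β (t - 1) y x) := by
  intro n
  induction n with
  | zero =>
    intro t ht htn x y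
    have htT : t = T := by omega
    subst htT
    simp only [pathInt]
    have hint : ∀ yt : ℝ,
        weibullDensity α γ β yt (y (t - 1)) (x t) a *
          (c1 * weibullPbar α γ β t (Function.update y t yt) x ^ (1 / α))
        = weibullDensity α γ β yt (y (t - 1)) (x t) a *
          (c1 * Ifun (1/α) (Real.exp (-a)) 0
            (pSum α γ β (t - 1) y x + weibullRho α γ β yt (y (t - 1)) (x t))) := by
      intro yt
      have hupd : weibullPbar α γ β t (Function.update y t yt) x
          = pSum α γ β (t - 1) y x + weibullRho α γ β yt (y (t - 1)) (x t) :=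
        pSum_update ht y x yt
      rw [hupd]
      rfl
    rw [integral_congr_ae (Filter.Eventually.of_forall hint)]
    exact weibull_int_step hα γ β a _ c1 _ _ 0
  | succ n ih =>
    intro t ht htn x y
    simp only [pathInt]
    have hkern : ∀ yt : ℝ,
        (∫ xt, pathInt (volume.restrict (Set.Ioi (0:ℝ)))
            (fun _ y' ylag x'' a' => weibullDensity α γ β y' ylag x'' a') g
            (fun y' x'' => c1 * weibullPbar α γ β T y' x'' ^ (1 / α)) a (n + 1) (t + 1)
            (Function.update y t yt) (Function.update x (t + 1) xt)
          ∂(g (t + 1) (Function.update y t yt, x, a)))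
        = c1 * Ifun (1/α) (Real.exp (-a)) (n + 1)
            (pSum α γ β (t - 1) y x + weibullRho α γ β yt (y (t - 1)) (x t)) := by
      intro yt
      have hin : ∀ xt : Fin k → ℝ,
          pathInt (volume.restrict (Set.Ioi (0:ℝ)))
            (fun _ y' ylag x'' a' => weibullDensity α γ β y' ylag x'' a') g
            (fun y' x'' => c1 * weibullPbar α γ β T y' x'' ^ (1 / α)) a (n + 1) (t + 1)
            (Function.update y t yt) (Function.update x (t + 1) xt)
          = c1 * Ifun (1/α) (Real.exp (-a)) (n + 1)
              (pSum α γ β (t - 1) y x + weibullRho α γ β yt (y (t - 1)) (x t)) := by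
        intro xt
        rw [ih (t + 1) (by omega) (by omega) (Function.update x (t + 1) xt)
          (Function.update y t yt)]
        congr 1
        rw [show t + 1 - 1 = t from rfl]
        rw [pSum_congr_x (Function.update y t yt)
          (fun r hr1 hrt => Function.update_of_ne (by omega) _ x), pSum_update ht y x yt]
      simp only [hin]
      haveI := hg (t + 1)
      rw [integral_const]
      simp [measure_univ]
    simp only [hkern]
    exact weibull_int_step hα γ β a _ c1 _ _ (n + 1)

end ModelAux2

/-- **FHR moment function for the ASF in the Weibull MPH model (equation B.9).** -/
theorem asf_weibull_FHR_moment
    (α : ℝ) (hα : 0 < α) (γ : ℝ) (β : Fin k → ℝ) (T : ℕ) (hT : 2 ≤ T)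
    -- the target evaluation point (ỹ₋, x̃) ∈ (0,∞) × ℝ^k
    (ytillag : ℝ) (hytillag : 0 < ytillag) (xtil : Fin k → ℝ) :
    -- condition (i)
    (∀ (y : ℕ → ℝ) (x : ℕ → Fin k → ℝ) (a : ℝ),
      iterInt (volume.restrict (Set.Ioi (0:ℝ)))
        (fun _ y' ylag x' a' => weibullDensity α γ β y' ylag x' a')
        (fun y' x' =>
          Real.exp (-((∑ i, xtil i * β i) / α) - γ * ytillag / α) *
              (Real.Gamma (1 + 1 / α) * Real.Gamma T / Real.Gamma ((T : ℝ) + 1 / α)) *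
              weibullPbar α γ β T y' x' ^ (1 / α) -
            Real.Gamma (1 + 1 / α) *
              Real.exp (-((∑ i, xtil i * β i) / α) - γ * ytillag / α) *
              Real.exp (-(a / α)))
        a x T 1 y = 0) ∧
    -- condition (ii)
    (∀ s, 2 ≤ s → s ≤ T → ∀ (y : ℕ → ℝ) (x x' : ℕ → Fin k → ℝ) (a : ℝ),
      (∀ i, i < s → x i = x' i) →
      iterInt (volume.restrict (Set.Ioi (0:ℝ)))
        (fun _ y' ylag x'' a' => weibullDensity α γ β y' ylag x'' a')
        (fun y' x'' =>
          Real.exp (-((∑ i, xtil i * β i) / α) - γ * ytillag / α) *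
              (Real.Gamma (1 + 1 / α) * Real.Gamma T / Real.Gamma ((T : ℝ) + 1 / α)) *
              weibullPbar α γ β T y' x'' ^ (1 / α) -
            Real.Gamma (1 + 1 / α) *
              Real.exp (-((∑ i, xtil i * β i) / α) - γ * ytillag / α) *
              Real.exp (-(a / α)))
        a x (T - s + 1) s y =
      iterInt (volume.restrict (Set.Ioi (0:ℝ)))
        (fun _ y' ylag x'' a' => weibullDensity α γ β y' ylag x'' a')
        (fun y' x'' =>
          Real.exp (-((∑ i, xtil i * β i) / α) - γ * ytillag / α) *
              (Real.Gamma (1 + 1 / α) * Real.Gamma T / Real.Gamma ((T : ℝ) + 1 / α)) *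
              weibullPbar α γ β T y' x'' ^ (1 / α) -
            Real.Gamma (1 + 1 / α) *
              Real.exp (-((∑ i, xtil i * β i) / α) - γ * ytillag / α) *
              Real.exp (-(a / α)))
        a x' (T - s + 1) s y) ∧
    -- consequence: E[φ(Y^T, X^T)] equals the average structural function
    (∀ (ν : Measure (ℝ × (Fin k → ℝ))), IsProbabilityMeasure ν →
      ∀ (piK : Kernel (ℝ × (Fin k → ℝ)) ℝ), IsMarkovKernel piK →
      ∀ (g : ℕ → Kernel ((ℕ → ℝ) × (ℕ → Fin k → ℝ) × ℝ) (Fin k → ℝ)),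
        (∀ t, IsMarkovKernel (g t)) →
      ∀ (y₀ : ℕ → ℝ) (x₀ : ℕ → Fin k → ℝ),
      -- φ is absolutely integrable under the induced joint law
      (∫⁻ p, ∫⁻ a, pathLint (volume.restrict (Set.Ioi (0:ℝ)))
          (fun _ y' ylag x' a' => weibullDensity α γ β y' ylag x' a') g
          (fun y' x' => ENNReal.ofReal
            |Real.exp (-((∑ i, xtil i * β i) / α) - γ * ytillag / α) *
              (Real.Gamma (1 + 1 / α) * Real.Gamma T / Real.Gamma ((T : ℝ) + 1 / α)) *
              weibullPbar α γ β T y' x' ^ (1 / α)|) a T 1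
          (Function.update y₀ 0 p.1) (Function.update x₀ 1 p.2) ∂(piK p) ∂ν) ≠ ⊤ →
      -- h is absolutely integrable under the induced joint law
      (∫⁻ p, ∫⁻ a, ENNReal.ofReal
          |Real.Gamma (1 + 1 / α) *
            Real.exp (-((∑ i, xtil i * β i) / α) - γ * ytillag / α) *
            Real.exp (-(a / α))| ∂(piK p) ∂ν) ≠ ⊤ →
      (∫ p, ∫ a, pathInt (volume.restrict (Set.Ioi (0:ℝ)))
          (fun _ y' ylag x' a' => weibullDensity α γ β y' ylag x' a') g
          (fun y' x' =>
            Real.exp (-((∑ i, xtil i * β i) / α) - γ * ytillag / α) *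
              (Real.Gamma (1 + 1 / α) * Real.Gamma T / Real.Gamma ((T : ℝ) + 1 / α)) *
              weibullPbar α γ β T y' x' ^ (1 / α)) a T 1
          (Function.update y₀ 0 p.1) (Function.update x₀ 1 p.2) ∂(piK p) ∂ν) =
        Real.Gamma (1 + 1 / α) *
          Real.exp (-((∑ i, xtil i * β i) / α) - γ * ytillag / α) *
          ∫ p, ∫ a, Real.exp (-(a / α)) ∂(piK p) ∂ν) := by
  have hp : (0:ℝ) < 1 / α := by positivity
  have hT1 : (0:ℝ) < (T:ℝ) := by exact_mod_cast (by omega : 0 < T)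
  have hGT : Real.Gamma (T:ℝ) ≠ 0 := (Real.Gamma_pos_of_pos hT1).ne'
  have hGTp : Real.Gamma ((T:ℝ) + 1 / α) ≠ 0 :=
    (Real.Gamma_pos_of_pos (by positivity)).ne'
  -- the two constants
  set e₀ := Real.exp (-((∑ i, xtil i * β i) / α) - γ * ytillag / α) with he₀
  set c1 := e₀ * (Real.Gamma (1 + 1 / α) * Real.Gamma T / Real.Gamma ((T : ℝ) + 1 / α))
    with hc1
  -- (exp (-a)) ^ (1/α) = exp (-(a/α))
  have hdp : ∀ a : ℝ, (Real.exp (-a)) ^ (1 / α) = Real.exp (-(a / α)) := by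
    intro a
    rw [← Real.exp_mul]
    congr 1
    field_simp
  have halg : ∀ a : ℝ, c1 * FHRAux.Ifun (1 / α) (Real.exp (-a)) T 0
      = Real.Gamma (1 + 1 / α) * e₀ * Real.exp (-(a / α)) := by
    intro a
    rw [FHRAux.Ifun_top hp (Real.exp_pos _) T (by omega), hdp a, hc1]
    field_simp
  have hpSum0 : ∀ (y : ℕ → ℝ) (x : ℕ → Fin k → ℝ), pSum α γ β 0 y x = 0 := by
    intro y x
    unfold pSum
    rw [Finset.Icc_eq_empty (by omega)]
    simp
  refine ⟨?_, ?_, ?_⟩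
  · -- condition (i)
    intro y x a
    have key := iterInt_key hα γ β T c1
      (Real.Gamma (1 + 1 / α) * e₀ * Real.exp (-(a / α))) a T 1 le_rfl (by omega) x y
    rw [show (1:ℕ) - 1 = 0 from rfl, hpSum0 y x] at key
    rw [key, halg a, sub_self]
  · -- condition (ii)
    intro s hs2 hsT y x x' a hxx
    rw [iterInt_key hα γ β T c1
        (Real.Gamma (1 + 1 / α) * e₀ * Real.exp (-(a / α))) a (T - s + 1) s (by omega)
        (by omega) x y,
      iterInt_key hα γ β T c1
        (Real.Gamma (1 + 1 / α) * e₀ * Real.exp (-(a / α))) a (T - s + 1) s (by omega)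
        (by omega) x' y]
    rw [pSum_congr_x y (fun r hr1 hr2 => hxx r (by omega))]
  · -- consequence
    intro ν hν piK hpiK g hg y₀ x₀ _ _
    have hpath : ∀ (yy : ℕ → ℝ) (xx : ℕ → Fin k → ℝ) (a : ℝ),
        pathInt (volume.restrict (Set.Ioi (0:ℝ)))
          (fun _ y' ylag x' a' => weibullDensity α γ β y' ylag x' a') g
          (fun y' x' => c1 * weibullPbar α γ β T y' x' ^ (1 / α)) a T 1 yy xx
        = Real.Gamma (1 + 1 / α) * e₀ * Real.exp (-(a / α)) := by
      intro yy xx a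
      obtain ⟨n, hn⟩ : ∃ n, T = n + 1 := ⟨T - 1, by omega⟩
      have key := pathInt_key hα γ β T c1 a g hg n 1 le_rfl (by omega) xx yy
      rw [show (1:ℕ) - 1 = 0 from rfl, hpSum0 yy xx] at key
      rw [hn] at key ⊢
      rw [key, ← hn, halg a]
    calc (∫ q, ∫ a, pathInt (volume.restrict (Set.Ioi (0:ℝ)))
            (fun _ y' ylag x' a' => weibullDensity α γ β y' ylag x' a') g
            (fun y' x' => c1 * weibullPbar α γ β T y' x' ^ (1 / α)) a T 1
            (Function.update y₀ 0 q.1) (Function.update x₀ 1 q.2) ∂(piK q) ∂ν)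
        = ∫ q, ∫ a, Real.Gamma (1 + 1 / α) * e₀ * Real.exp (-(a / α)) ∂(piK q) ∂ν := by
          refine integral_congr_ae (Filter.Eventually.of_forall fun q => ?_)
          exact integral_congr_ae (Filter.Eventually.of_forall fun a => hpath _ _ a)
      _ = ∫ q, Real.Gamma (1 + 1 / α) * e₀ * ∫ a, Real.exp (-(a / α)) ∂(piK q) ∂ν := by
          refine integral_congr_ae (Filter.Eventually.of_forall fun q => ?_)
          exact integral_const_mul _ _
      _ = Real.Gamma (1 + 1 / α) * e₀ * ∫ q, ∫ a, Real.exp (-(a / α)) ∂(piK q) ∂ν :=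
          integral_const_mul _ _

end WeibullMPH

end
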